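/- The surrogate u σ(u) with σ(u) = 1/(1+e^{-u}) satisfies: E_q[g(x)σ(g(x))] ≤ 0 and g bounded implies E_q[max(g(x),0)] ≤ E_q[|g(x)|σ(-|g(x)|)] ≤ sup_{t≥0} t/(1+e^t); more precisely E_q[[g]_+] = E_q[gσ(g)] + E_q[|g|σ(-|g|)], so a zero surrogate expectation bounds the true expected violation by E_q[|g|σ(-|g|)]. -/

import Mathlib

open MeasureTheory Real

lemma sig_pt (u : ℝ) :
    max u 0 = u * (1 / (1 + exp (-u))) + |u| * (1 / (1 + exp (|u|))) := by
  have h1 : (0:ℝ) < 1 + exp (-u) := by positivity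
  have h2 : (0:ℝ) < 1 + exp u := by positivity
  rcases le_or_gt 0 u with h | h
  · rw [abs_of_nonneg h, max_eq_left h]
    rw [Real.exp_neg]
    field_simp
    ring
  · rw [abs_of_neg h, max_eq_right h.le, Real.exp_neg]
    field_simp
    ring

/-- Surrogate-expectation decomposition: with `σ(u) = 1/(1+e^{-u})`, one has
`E_q[[g]₊] = E_q[g σ(g)] + E_q[|g| σ(-|g|)]`; hence if `E_q[g σ(g)] ≤ 0` and `g`
is bounded, the true expected violation satisfies
`E_q[[g]₊] ≤ E_q[|g| σ(-|g|)] ≤ sup_{t ≥ 0} t/(1+e^t)`. -/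
theorem sigmoid_surrogate_expectation
    {α : Type*} [MeasurableSpace α]
    (q : Measure α) [IsProbabilityMeasure q]
    (g : α → ℝ) (hmeas : Measurable g)
    (hbdd : ∃ B : ℝ, ∀ x, |g x| ≤ B)
    (hint : Integrable g q) :
    ((∫ x, max (g x) 0 ∂q)
      = (∫ x, g x * (1 / (1 + exp (-g x))) ∂q)
        + ∫ x, |g x| * (1 / (1 + exp (|g x|))) ∂q) ∧
    ((∫ x, g x * (1 / (1 + exp (-g x))) ∂q) ≤ 0 →
      ((∫ x, max (g x) 0 ∂q) ≤ ∫ x, |g x| * (1 / (1 + exp (|g x|))) ∂q) ∧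
      (∫ x, |g x| * (1 / (1 + exp (|g x|))) ∂q)
        ≤ sSup {v : ℝ | ∃ t : ℝ, 0 ≤ t ∧ v = t / (1 + exp t)}) := by
  have habs : Integrable (fun x => |g x|) q := hint.abs
  have hfac : ∀ u : ℝ, |1 / (1 + exp u)| ≤ 1 := by
    intro u
    rw [abs_of_nonneg (by positivity)]
    rw [div_le_one (by positivity)]
    nlinarith [Real.exp_pos u]
  have hint1 : Integrable (fun x => g x * (1 / (1 + exp (-g x)))) q := by
    refine habs.mono' ?_ ?_
    · exact (Measurable.aestronglyMeasurable (by fun_prop :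
        Measurable fun x => g x * (1 / (1 + exp (-g x)))))
    · filter_upwards with x
      rw [Real.norm_eq_abs, abs_mul]
      calc |g x| * |1 / (1 + exp (-g x))| ≤ |g x| * 1 :=
        mul_le_mul_of_nonneg_left (hfac _) (abs_nonneg _)
      _ = |g x| := mul_one _
  have hint2 : Integrable (fun x => |g x| * (1 / (1 + exp (|g x|)))) q := by
    refine habs.mono' ?_ ?_
    · exact (Measurable.aestronglyMeasurable (by fun_prop :
        Measurable fun x => |g x| * (1 / (1 + exp (|g x|)))))
    · filter_upwards with x
      rw [Real.norm_eq_abs, abs_mul, abs_abs]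
      calc |g x| * |1 / (1 + exp (|g x|))| ≤ |g x| * 1 :=
        mul_le_mul_of_nonneg_left (hfac _) (abs_nonneg _)
      _ = |g x| := mul_one _
  have hdec : (∫ x, max (g x) 0 ∂q)
      = (∫ x, g x * (1 / (1 + exp (-g x))) ∂q)
        + ∫ x, |g x| * (1 / (1 + exp (|g x|))) ∂q := by
    rw [← integral_add hint1 hint2]
    exact integral_congr_ae (Filter.Eventually.of_forall fun x => sig_pt (g x))
  refine ⟨hdec, fun hneg => ?_⟩
  constructor
  · rw [hdec]; linarith
  · have hmem : ∀ x, |g x| * (1 / (1 + exp (|g x|)))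
        ∈ {v : ℝ | ∃ t : ℝ, 0 ≤ t ∧ v = t / (1 + exp t)} := fun x =>
      ⟨|g x|, abs_nonneg _, by rw [mul_one_div]⟩
    have hbdd' : BddAbove {v : ℝ | ∃ t : ℝ, 0 ≤ t ∧ v = t / (1 + exp t)} := by
      refine ⟨1, fun v hv => ?_⟩
      obtain ⟨t, ht, rfl⟩ := hv
      rw [div_le_one (by positivity)]
      nlinarith [Real.add_one_le_exp t]
    calc (∫ x, |g x| * (1 / (1 + exp (|g x|))) ∂q)
        ≤ ∫ _, sSup {v : ℝ | ∃ t : ℝ, 0 ≤ t ∧ v = t / (1 + exp t)} ∂q := by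
          refine integral_mono hint2 (integrable_const _) fun x => ?_
          exact le_csSup hbdd' (hmem x)
      _ = sSup {v : ℝ | ∃ t : ℝ, 0 ≤ t ∧ v = t / (1 + exp t)} := by
          simp
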